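/- Let M be an additive submonoid of ℤ² that is rationally supported. If M has infinitely many atoms, then M is atomic, i.e., every non-invertible element of M is a finite sum of atoms. -/

import Mathlib

/-- An element of ℤ² invertible within the submonoid M. -/
def IsUnitIn (M : AddSubmonoid (ℤ × ℤ)) (x : ℤ × ℤ) : Prop :=
  x ∈ M ∧ -x ∈ M

/-- An atom of the submonoid M of ℤ². -/
def IsAtomIn (M : AddSubmonoid (ℤ × ℤ)) (a : ℤ × ℤ) : Prop :=
  a ∈ M ∧ ¬ IsUnitIn M a ∧
    ∀ r s : ℤ × ℤ, r ∈ M → s ∈ M → a = r + s → IsUnitIn M r ∨ IsUnitIn M s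

/-- The submonoid generated by the atoms of M. -/
def AtomicElems (M : AddSubmonoid (ℤ × ℤ)) : AddSubmonoid (ℤ × ℤ) :=
  AddSubmonoid.closure {a : ℤ × ℤ | IsAtomIn M a}

/-- M is atomic: every non-invertible element is a sum of atoms. -/
def IsAtomicMonoid (M : AddSubmonoid (ℤ × ℤ)) : Prop :=
  ∀ x ∈ M, ¬ IsUnitIn M x → x ∈ AtomicElems M

/-- M is rationally supported. -/
def RationallySupported (M : AddSubmonoid (ℤ × ℤ)) : Prop :=
  ∃ a b : ℤ, (a ≠ 0 ∨ b ≠ 0) ∧ ∀ x ∈ M, 0 ≤ a * x.1 + b * x.2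

section Transport

variable (e : (ℤ × ℤ) ≃+ (ℤ × ℤ)) (M : AddSubmonoid (ℤ × ℤ))

lemma mem_mapEquiv {x : ℤ × ℤ} : e x ∈ M.map e.toAddMonoidHom ↔ x ∈ M := by
  rw [AddSubmonoid.mem_map_equiv, AddEquiv.symm_apply_apply]

lemma unitIn_mapEquiv {x : ℤ × ℤ} :
    IsUnitIn (M.map e.toAddMonoidHom) (e x) ↔ IsUnitIn M x := by
  unfold IsUnitIn
  rw [← map_neg, mem_mapEquiv, mem_mapEquiv]

lemma atomIn_mapEquiv {x : ℤ × ℤ} :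
    IsAtomIn (M.map e.toAddMonoidHom) (e x) ↔ IsAtomIn M x := by
  unfold IsAtomIn
  rw [mem_mapEquiv, unitIn_mapEquiv]
  constructor
  · rintro ⟨h1, h2, h3⟩
    refine ⟨h1, h2, fun r s hr hs hrs => ?_⟩
    have := h3 (e r) (e s) ((mem_mapEquiv e M).2 hr) ((mem_mapEquiv e M).2 hs)
      (by rw [hrs, map_add])
    rwa [unitIn_mapEquiv, unitIn_mapEquiv] at this
  · rintro ⟨h1, h2, h3⟩
    refine ⟨h1, h2, fun r s hr hs hrs => ?_⟩
    have hr' := hr; have hs' := hs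
    rw [AddSubmonoid.mem_map_equiv] at hr' hs'
    have : x = e.symm r + e.symm s := by
      apply e.injective
      rw [map_add, AddEquiv.apply_symm_apply, AddEquiv.apply_symm_apply, hrs]
    have h4 := h3 _ _ hr' hs' this
    rcases h4 with h4 | h4
    · left
      have := (unitIn_mapEquiv e M (x := e.symm r)).2 h4
      rwa [AddEquiv.apply_symm_apply] at this
    · right
      have := (unitIn_mapEquiv e M (x := e.symm s)).2 h4
      rwa [AddEquiv.apply_symm_apply] at this

lemma atoms_mapEquiv :
    {a : ℤ × ℤ | IsAtomIn (M.map e.toAddMonoidHom) a} = e '' {a : ℤ × ℤ | IsAtomIn M a} := by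
  ext a
  simp only [Set.mem_setOf_eq, Set.mem_image]
  constructor
  · intro h
    refine ⟨e.symm a, ?_, AddEquiv.apply_symm_apply e a⟩
    rw [← atomIn_mapEquiv e M, AddEquiv.apply_symm_apply]
    exact h
  · rintro ⟨b, hb, rfl⟩
    exact (atomIn_mapEquiv e M).2 hb

lemma atomicElems_mapEquiv :
    AtomicElems (M.map e.toAddMonoidHom) = (AtomicElems M).map e.toAddMonoidHom := by
  unfold AtomicElems
  rw [atoms_mapEquiv, AddMonoidHom.map_mclosure]
  rfl

lemma isAtomicMonoid_of_mapEquiv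
    (h : IsAtomicMonoid (M.map e.toAddMonoidHom)) : IsAtomicMonoid M := by
  intro x hx hux
  have h1 := h (e x) ((mem_mapEquiv e M).2 hx) (by rwa [unitIn_mapEquiv])
  rw [atomicElems_mapEquiv] at h1
  rcases h1 with ⟨z, hz, hze⟩
  have : z = x := e.injective hze
  rwa [← this]

end Transport

section CaseA

lemma zero_isUnitIn (N : AddSubmonoid (ℤ × ℤ)) : IsUnitIn N 0 :=
  ⟨zero_mem N, by simpa using zero_mem N⟩

lemma aux1 (N : AddSubmonoid (ℤ × ℤ)) (hpos : ∀ x ∈ N, 0 ≤ x.1)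
    (hg : ∀ y : ℤ, ((0 : ℤ), y) ∈ N → ((0 : ℤ), -y) ∈ N) : IsAtomicMonoid N := by
  have hunit : ∀ x ∈ N, x.1 = 0 → IsUnitIn N x := by
    intro x hx h1
    have hxe : x = ((0 : ℤ), x.2) := Prod.ext h1 rfl
    have hx0 : ((0 : ℤ), x.2) ∈ N := by rwa [← hxe]
    refine ⟨hx, ?_⟩
    have := hg x.2 hx0
    have hnx : -x = ((0 : ℤ), -x.2) := by
      rw [Prod.ext_iff]; simp [h1]
    rwa [hnx]
  suffices H : ∀ n : ℕ, ∀ x ∈ N, ¬ IsUnitIn N x → x.1.toNat ≤ n → x ∈ AtomicElems N by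
    intro x hx hux; exact H x.1.toNat x hx hux le_rfl
  intro n
  induction n using Nat.strong_induction_on with
  | _ n ih =>
    intro x hx hux hxn
    have hx1 : 0 < x.1 := by
      rcases lt_or_eq_of_le (hpos x hx) with h | h
      · exact h
      · exact absurd (hunit x hx h.symm) hux
    by_cases hat : IsAtomIn N x
    · exact AddSubmonoid.subset_closure hat
    · have h3 : ¬ ∀ r s : ℤ × ℤ, r ∈ N → s ∈ N → x = r + s →
          IsUnitIn N r ∨ IsUnitIn N s := fun h => hat ⟨hx, hux, h⟩
      push_neg at h3
      obtain ⟨r, s, hr, hs, hrs, hur, hus⟩ := h3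
      have hr1 : 0 < r.1 := by
        rcases lt_or_eq_of_le (hpos r hr) with h | h
        · exact h
        · exact absurd (hunit r hr h.symm) hur
      have hs1 : 0 < s.1 := by
        rcases lt_or_eq_of_le (hpos s hs) with h | h
        · exact h
        · exact absurd (hunit s hs h.symm) hus
      have hsum : x.1 = r.1 + s.1 := by rw [hrs]; rfl
      have hrA : r ∈ AtomicElems N :=
        ih r.1.toNat (by omega) r hr hur le_rfl
      have hsA : s ∈ AtomicElems N :=
        ih s.1.toNat (by omega) s hs hus le_rfl
      rw [hrs]; exact add_mem hrA hsA

end CaseA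

section CaseB

variable (N : AddSubmonoid (ℤ × ℤ))

lemma unit_eq_zero (hpos : ∀ x ∈ N, 0 ≤ x.1)
    (hline : ∀ y : ℤ, ((0 : ℤ), y) ∈ N → 0 ≤ y) :
    ∀ x : ℤ × ℤ, IsUnitIn N x → x = 0 := by
  rintro x ⟨hx, hnx⟩
  have h1 : x.1 = 0 := by
    have := hpos x hx
    have h2 := hpos (-x) hnx
    have : (-x).1 = -x.1 := rfl
    omega
  have hxe : x = ((0 : ℤ), x.2) := Prod.ext h1 rfl
  have hx2 : 0 ≤ x.2 := hline x.2 (by rwa [← hxe])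
  have hnx2 : 0 ≤ -x.2 := by
    refine hline (-x.2) ?_
    have : -x = ((0 : ℤ), -x.2) := by rw [Prod.ext_iff]; simp [h1]
    rwa [← this]
  have h3 : x.2 = 0 := by omega
  exact Prod.ext h1 h3

lemma line_atomic (hpos : ∀ x ∈ N, 0 ≤ x.1)
    (hline : ∀ y : ℤ, ((0 : ℤ), y) ∈ N → 0 ≤ y) :
    ∀ y : ℤ, 0 < y → ((0 : ℤ), y) ∈ N → ((0 : ℤ), y) ∈ AtomicElems N := by
  suffices H : ∀ n : ℕ, ∀ y : ℤ, 0 < y → y.toNat ≤ n → ((0 : ℤ), y) ∈ N →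
      ((0 : ℤ), y) ∈ AtomicElems N by
    intro y hy hyN; exact H y.toNat y hy le_rfl hyN
  intro n
  induction n using Nat.strong_induction_on with
  | _ n ih =>
    intro y hy hyn hyN
    have huy : ¬ IsUnitIn N ((0 : ℤ), y) := by
      intro h
      have h2 : y = (0 : ℤ) := congrArg Prod.snd (unit_eq_zero N hpos hline _ h)
      omega
    by_cases hat : IsAtomIn N ((0 : ℤ), y)
    · exact AddSubmonoid.subset_closure hat
    · have h3 : ¬ ∀ r s : ℤ × ℤ, r ∈ N → s ∈ N → ((0 : ℤ), y) = r + s →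
          IsUnitIn N r ∨ IsUnitIn N s := fun h => hat ⟨hyN, huy, h⟩
      push_neg at h3
      obtain ⟨r, s, hr, hs, hrs, hur, hus⟩ := h3
      have hsum1 : (0 : ℤ) = r.1 + s.1 := congrArg Prod.fst hrs
      have hr1 : r.1 = 0 := by have := hpos r hr; have := hpos s hs; omega
      have hs1 : s.1 = 0 := by have := hpos r hr; have := hpos s hs; omega
      have hre : r = ((0 : ℤ), r.2) := Prod.ext hr1 rfl
      have hse : s = ((0 : ℤ), s.2) := Prod.ext hs1 rfl
      have hr2 : 0 ≤ r.2 := hline r.2 (by rwa [← hre])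
      have hs2 : 0 ≤ s.2 := hline s.2 (by rwa [← hse])
      have hsum2 : y = r.2 + s.2 := congrArg Prod.snd hrs
      have hr2' : 0 < r.2 := by
        rcases lt_or_eq_of_le hr2 with h | h
        · exact h
        · exact absurd (by rw [hre, ← h]; exact zero_isUnitIn N) hur
      have hs2' : 0 < s.2 := by
        rcases lt_or_eq_of_le hs2 with h | h
        · exact h
        · exact absurd (by rw [hse, ← h]; exact zero_isUnitIn N) hus
      have hrA : ((0 : ℤ), r.2) ∈ AtomicElems N :=
        ih r.2.toNat (by omega) r.2 hr2' le_rfl (by rwa [← hre])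
      have hsA : ((0 : ℤ), s.2) ∈ AtomicElems N :=
        ih s.2.toNat (by omega) s.2 hs2' le_rfl (by rwa [← hse])
      rw [hrs, hre, hse]
      exact add_mem hrA hsA

end CaseB

section CaseB2

lemma aux2 (N : AddSubmonoid (ℤ × ℤ)) (hpos : ∀ x ∈ N, 0 ≤ x.1)
    (hline : ∀ y : ℤ, ((0 : ℤ), y) ∈ N → 0 ≤ y)
    (q : ℤ) (hq : 0 < q) (hqN : ((0 : ℤ), q) ∈ N)
    (hinf : {a : ℤ × ℤ | IsAtomIn N a}.Infinite) : IsAtomicMonoid N := by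
  -- multiples of q on the line
  have hmul : ∀ k : ℕ, ((0 : ℤ), (k : ℤ) * q) ∈ N := by
    intro k
    induction k with
    | zero => simpa using (show ((0 : ℤ), (0 : ℤ)) ∈ N from zero_mem N)
    | succ k ih =>
      have h := add_mem ih hqN
      have he : ((0 : ℤ), (k : ℤ) * q) + ((0 : ℤ), q) = ((0 : ℤ), ((k+1 : ℕ) : ℤ) * q) := by
        rw [Prod.mk_add_mk]; push_cast; ring_nf
      rwa [he] at h
  have hdiv : ∀ m : ℤ, 0 ≤ m → q ∣ m → ((0 : ℤ), m) ∈ N := by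
    rintro m hm ⟨t, rfl⟩
    have ht : 0 ≤ t := nonneg_of_mul_nonneg_right (by linarith [mul_comm q t]) hq
    have := hmul t.toNat
    rwa [Int.toNat_of_nonneg ht, mul_comm] at this
  by_contra hno
  unfold IsAtomicMonoid at hno
  push_neg at hno
  obtain ⟨x₀, hx₀N, hx₀u, hx₀A⟩ := hno
  -- the set of bad elements and the minimal first coordinate c
  set bad : Set (ℤ × ℤ) := {x | x ∈ N ∧ ¬ IsUnitIn N x ∧ x ∉ AtomicElems N} with hbad
  have hx₀bad : x₀ ∈ bad := ⟨hx₀N, hx₀u, hx₀A⟩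
  set cset : Set ℕ := {n | ∃ x, x ∈ bad ∧ x.1 = (n : ℤ)} with hcset
  have hcne : cset.Nonempty :=
    ⟨x₀.1.toNat, x₀, hx₀bad, (Int.toNat_of_nonneg (hpos x₀ hx₀N)).symm⟩
  set c : ℕ := sInf cset with hcdef
  obtain ⟨xc, hxcbad, hxc1⟩ : ∃ x, x ∈ bad ∧ x.1 = (c : ℤ) := Nat.sInf_mem hcne
  have cmin : ∀ x ∈ bad, (c : ℤ) ≤ x.1 := by
    intro x hx
    have h1 : x.1.toNat ∈ cset := ⟨x, hx, (Int.toNat_of_nonneg (hpos x hx.1)).symm⟩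
    have := Nat.sInf_le h1
    have h2 := hpos x hx.1
    omega
  -- bad elements are nonzero and not on the line
  have hbadne : ∀ x ∈ bad, x ≠ 0 := by
    rintro x hx rfl
    exact hx.2.1 (zero_isUnitIn N)
  have hcpos : 0 < (c : ℤ) := by
    rcases lt_or_eq_of_le (by exact_mod_cast Nat.zero_le c : (0:ℤ) ≤ (c:ℤ)) with h | h
    · exact h
    · exfalso
      have h1 : xc.1 = 0 := by omega
      have hxe : xc = ((0 : ℤ), xc.2) := Prod.ext h1 rfl
      have h2 : 0 ≤ xc.2 := hline xc.2 (by rw [← hxe]; exact hxcbad.1)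
      have h3 : xc.2 ≠ 0 := by
        intro h4
        apply hbadne xc hxcbad
        rw [hxe, h4]; rfl
      apply hxcbad.2.2
      rw [hxe]
      exact line_atomic N hpos hline xc.2 (by omega) (by rw [← hxe]; exact hxcbad.1)
  -- descent on the minimal fiber
  have hdesc : ∀ x ∈ bad, x.1 = (c : ℤ) →
      ∃ x', (x' ∈ bad ∧ x'.1 = (c : ℤ)) ∧ x'.2 < x.2 ∧ ((0 : ℤ), x.2 - x'.2) ∈ N := by
    intro x hx hx1
    have hat : ¬ IsAtomIn N x := fun h => hx.2.2 (AddSubmonoid.subset_closure h)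
    have h3 : ¬ ∀ r s : ℤ × ℤ, r ∈ N → s ∈ N → x = r + s →
        IsUnitIn N r ∨ IsUnitIn N s := fun h => hat ⟨hx.1, hx.2.1, h⟩
    push_neg at h3
    obtain ⟨r, s, hr, hs, hrs, hur, hus⟩ := h3
    have hsum1 : x.1 = r.1 + s.1 := congrArg Prod.fst hrs
    have hsum2 : x.2 = r.2 + s.2 := congrArg Prod.snd hrs
    have hrpos := hpos r hr
    have hspos := hpos s hs
    -- a helper: a line element which is a nonunit is atomic
    have hlineAtomic : ∀ u : ℤ × ℤ, u ∈ N → ¬ IsUnitIn N u → u.1 = 0 →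
        u ∈ AtomicElems N ∧ 0 < u.2 := by
      intro u hu huu hu1
      have hue : u = ((0 : ℤ), u.2) := Prod.ext hu1 rfl
      have h2 : 0 ≤ u.2 := hline u.2 (by rwa [← hue])
      have h3 : u.2 ≠ 0 := by
        intro h4
        apply huu
        rw [show u = 0 from Prod.ext hu1 h4]
        exact zero_isUnitIn N
      exact ⟨by rw [hue]; exact line_atomic N hpos hline u.2 (by omega) (by rwa [← hue]),
        by omega⟩
    rcases eq_or_lt_of_le hrpos with hr0 | hr0
    · -- r is on the line, x' = s
      obtain ⟨hrA, hr2⟩ := hlineAtomic r hr hur hr0.symm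
      have hsbad : s ∈ bad := by
        refine ⟨hs, hus, fun hsA => hx.2.2 ?_⟩
        rw [hrs]; exact add_mem hrA hsA
      refine ⟨s, ⟨hsbad, by omega⟩, by omega, ?_⟩
      have : ((0 : ℤ), x.2 - s.2) = r := (Prod.ext (by omega) (by omega)).symm
      rwa [this]
    rcases eq_or_lt_of_le hspos with hs0 | hs0
    · -- s is on the line, x' = r
      obtain ⟨hsA, hs2⟩ := hlineAtomic s hs hus hs0.symm
      have hrbad : r ∈ bad := by
        refine ⟨hr, hur, fun hrA => hx.2.2 ?_⟩
        rw [hrs]; exact add_mem hrA hsA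
      refine ⟨r, ⟨hrbad, by omega⟩, by omega, ?_⟩
      have : ((0 : ℤ), x.2 - r.2) = s := (Prod.ext (by omega) (by omega)).symm
      rwa [this]
    · -- both have positive first coordinate: both atomic, contradiction
      exfalso
      have hrA : r ∈ AtomicElems N := by
        by_contra h
        have : r ∈ bad := ⟨hr, hur, h⟩
        have := cmin r this
        omega
      have hsA : s ∈ AtomicElems N := by
        by_contra h
        have : s ∈ bad := ⟨hs, hus, h⟩
        have := cmin s this
        omega
      exact hx.2.2 (by rw [hrs]; exact add_mem hrA hsA)
  -- build a strictly decreasing sequence in the minimal fiber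
  have hstep : ∀ x : {x : ℤ × ℤ // x ∈ bad ∧ x.1 = (c : ℤ)},
      ∃ x' : {x : ℤ × ℤ // x ∈ bad ∧ x.1 = (c : ℤ)},
        x'.val.2 < x.val.2 ∧ ((0 : ℤ), x.val.2 - x'.val.2) ∈ N := by
    rintro ⟨x, hx1, hx2⟩
    obtain ⟨x', hx', h1, h2⟩ := hdesc x hx1 hx2
    exact ⟨⟨x', hx'⟩, h1, h2⟩
  choose g hg1 _hg2 using hstep
  set Y : ℕ → {x : ℤ × ℤ // x ∈ bad ∧ x.1 = (c : ℤ)} :=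
    fun n => g^[n] ⟨xc, hxcbad, hxc1⟩ with hY
  have hYsucc : ∀ n, Y (n + 1) = g (Y n) := fun n => Function.iterate_succ_apply' g n _
  have hYdec : ∀ n : ℕ, (Y n).val.2 ≤ xc.2 - n := by
    intro n
    induction n with
    | zero => simp [hY]
    | succ n ih =>
      have h1 := hg1 (Y n)
      rw [← hYsucc n] at h1
      push_cast
      push_cast at ih
      omega
  -- pigeonhole: some residue class mod q occurs infinitely often
  have hpig : ∃ r₀ ∈ Finset.Icc (0 : ℤ) (q - 1),
      {n : ℕ | (Y n).val.2 % q = r₀}.Infinite := by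
    by_contra hcon
    push_neg at hcon
    have hfin : ∀ r ∈ (↑(Finset.Icc (0 : ℤ) (q - 1)) : Set ℤ),
        {n : ℕ | (Y n).val.2 % q = r}.Finite := by
      intro r hr
      rcases Set.finite_or_infinite {n : ℕ | (Y n).val.2 % q = r} with h | h
      · exact h
      · exact absurd h (Set.not_infinite.mpr (hcon r (by simpa using hr)))
    have hsub : (Set.univ : Set ℕ) ⊆
        ⋃ r ∈ (↑(Finset.Icc (0 : ℤ) (q - 1)) : Set ℤ), {n : ℕ | (Y n).val.2 % q = r} := by
      intro n _
      refine Set.mem_biUnion ?_ rfl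
      simp only [Finset.coe_Icc, Set.mem_Icc]
      have h1 := Int.emod_nonneg ((Y n).val.2) (ne_of_gt hq)
      have h2 := Int.emod_lt_of_pos ((Y n).val.2) hq
      omega
    exact Set.infinite_univ
      (Set.Finite.subset (Set.Finite.biUnion (Finset.Icc (0 : ℤ) (q - 1)).finite_toSet hfin) hsub)
  obtain ⟨r₀, hr₀mem, hr₀inf⟩ := hpig
  rw [Finset.mem_Icc] at hr₀mem
  -- the full fiber in the residue class r₀ is contained in N
  have Pmem : ∀ y' : ℤ, y' % q = r₀ → ((c : ℤ), y') ∈ N := by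
    intro y' hy'
    obtain ⟨n, hnI, hn⟩ : ∃ n : ℕ, (Y n).val.2 % q = r₀ ∧ (xc.2 - y').toNat < n := by
      by_contra hcon
      push_neg at hcon
      apply hr₀inf
      apply Set.Finite.subset (Set.finite_Icc 0 ((xc.2 - y').toNat))
      intro n hn
      simp only [Set.mem_setOf_eq] at hn
      simp only [Set.mem_Icc]
      exact ⟨Nat.zero_le _, hcon n hn⟩
    have hyd := hYdec n
    have h1 : (Y n).val.2 ≤ y' := by omega
    have h2 : q ∣ y' - (Y n).val.2 := by
      have h3 : (Y n).val.2 % q = y' % q := by rw [hnI, hy']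
      exact Int.ModEq.dvd h3
    have h3 : ((0 : ℤ), y' - (Y n).val.2) ∈ N := hdiv _ (by omega) h2
    have h4 : (Y n).val ∈ N := (Y n).prop.1.1
    have h5 : (Y n).val = ((c : ℤ), (Y n).val.2) := Prod.ext (Y n).prop.2 rfl
    have h6 := add_mem h4 h3
    rw [h5] at h6
    have he : ((c : ℤ), (Y n).val.2) + ((0 : ℤ), y' - (Y n).val.2) = ((c : ℤ), y') := by
      rw [Prod.mk_add_mk, Prod.mk.injEq]
      constructor <;> ring
    rwa [he] at h6
  have hr₀self : r₀ % q = r₀ := Int.emod_eq_of_lt hr₀mem.1 (by omega)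
  have Pmem' : ∀ t : ℤ, ((c : ℤ), r₀ + t * q) ∈ N := by
    intro t
    apply Pmem
    rw [Int.add_mul_emod_self_right]
    exact hr₀self
  -- multiple copies of the fiber
  have Pm : ∀ m : ℕ, ∀ t : ℤ,
      (((m + 1 : ℕ) : ℤ) * (c : ℤ), ((m + 1 : ℕ) : ℤ) * r₀ + t * q) ∈ N := by
    intro m
    induction m with
    | zero =>
      intro t
      have h := Pmem' t
      have he : ((c : ℤ), r₀ + t * q)
          = (((0 + 1 : ℕ) : ℤ) * (c : ℤ), ((0 + 1 : ℕ) : ℤ) * r₀ + t * q) := by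
        rw [Prod.mk.injEq]; push_cast; constructor <;> ring
      rwa [he] at h
    | succ m ih =>
      intro t
      have h1 := add_mem (Pmem' 0) (ih t)
      have he : ((c : ℤ), r₀ + 0 * q)
            + (((m + 1 : ℕ) : ℤ) * (c : ℤ), ((m + 1 : ℕ) : ℤ) * r₀ + t * q)
          = (((m + 1 + 1 : ℕ) : ℤ) * (c : ℤ), ((m + 1 + 1 : ℕ) : ℤ) * r₀ + t * q) := by
        rw [Prod.mk_add_mk, Prod.mk.injEq]; push_cast; constructor <;> ring
      rwa [he] at h1
  -- atoms are nonzero, and an atom cannot decompose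
  have hkey : ∀ u v p : ℤ × ℤ, IsAtomIn N u → IsAtomIn N v → p ∈ N → p ≠ 0 →
      u = v + p → False := by
    intro u v p hu hv hp hpne hupv
    rcases hu.2.2 v p hv.1 hp hupv with h | h
    · exact hv.2.1 h
    · exact hpne (unit_eq_zero N hpos hline p h)
  -- injectivity of the class map on atoms
  have hψ : ∀ a b : ℤ × ℤ, IsAtomIn N a → IsAtomIn N b →
      a.1 % (c : ℤ) = b.1 % (c : ℤ) →
      (a.2 - a.1 / (c : ℤ) * r₀) % q = (b.2 - b.1 / (c : ℤ) * r₀) % q → a = b := by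
    intro a b ha hb h1 h2
    have hDvd : q ∣ (b.2 - b.1 / (c : ℤ) * r₀) - (a.2 - a.1 / (c : ℤ) * r₀) :=
      Int.ModEq.dvd h2
    obtain ⟨t, ht⟩ := hDvd
    set m : ℤ := b.1 / (c : ℤ) - a.1 / (c : ℤ) with hm
    have e1 := Int.mul_ediv_add_emod a.1 (c : ℤ)
    have e2 := Int.mul_ediv_add_emod b.1 (c : ℤ)
    have hm1 : b.1 - a.1 = (c : ℤ) * m := by
      rw [hm]; linear_combination e1 - e2 - h1
    have hm2 : b.2 - a.2 = m * r₀ + q * t := by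
      rw [hm]; linear_combination ht
    rcases lt_trichotomy m 0 with hm0 | hm0 | hm0
    · -- a = b + p
      exfalso
      set k : ℕ := (-m).toNat - 1 with hk
      have hkc : ((k + 1 : ℕ) : ℤ) = -m := by omega
      have hp := Pm k (-t)
      have hpne : (((k + 1 : ℕ) : ℤ) * (c : ℤ), ((k + 1 : ℕ) : ℤ) * r₀ + (-t) * q) ≠ 0 := by
        intro h
        have h5 : ((k + 1 : ℕ) : ℤ) * (c : ℤ) = 0 := congrArg Prod.fst h
        have h6 : (0 : ℤ) < ((k + 1 : ℕ) : ℤ) * (c : ℤ) :=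
          mul_pos (by positivity) hcpos
        omega
      have heq : a = b + (((k + 1 : ℕ) : ℤ) * (c : ℤ), ((k + 1 : ℕ) : ℤ) * r₀ + (-t) * q) := by
        have hA : a.1 = b.1 + ((k + 1 : ℕ) : ℤ) * (c : ℤ) := by
          linear_combination (-1 : ℤ) * hm1 - (c : ℤ) * hkc
        have hB : a.2 = b.2 + (((k + 1 : ℕ) : ℤ) * r₀ + (-t) * q) := by
          linear_combination (-1 : ℤ) * hm2 - r₀ * hkc
        exact Prod.ext hA hB
      exact hkey a b _ ha hb hp hpne heq
    · -- same class, compare second coordinates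
      have hab1 : a.1 = b.1 := by rw [hm0, mul_zero] at hm1; omega
      rcases lt_trichotomy t 0 with ht0 | ht0 | ht0
      · exfalso
        have hp : ((0 : ℤ), q * (-t)) ∈ N := hdiv _ (by nlinarith) ⟨-t, rfl⟩
        have hpne : ((0 : ℤ), q * (-t)) ≠ 0 := by
          intro h
          have h5 : q * (-t) = 0 := congrArg Prod.snd h
          nlinarith
        have heq : a = b + ((0 : ℤ), q * (-t)) := by
          refine Prod.ext (show a.1 = b.1 + 0 by omega) ?_
          rw [hm0] at hm2
          show a.2 = b.2 + q * (-t)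
          linarith [hm2]
        exact hkey a b _ ha hb hp hpne heq
      · have hab2 : a.2 = b.2 := by rw [hm0, ht0] at hm2; simp at hm2; omega
        exact Prod.ext hab1 hab2
      · exfalso
        have hp : ((0 : ℤ), q * t) ∈ N := hdiv _ (by nlinarith) ⟨t, rfl⟩
        have hpne : ((0 : ℤ), q * t) ≠ 0 := by
          intro h
          have h5 : q * t = 0 := congrArg Prod.snd h
          nlinarith
        have heq : b = a + ((0 : ℤ), q * t) := by
          refine Prod.ext (show b.1 = a.1 + 0 by omega) ?_
          rw [hm0] at hm2
          show b.2 = a.2 + q * t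
          linarith [hm2]
        exact hkey b a _ hb ha hp hpne heq
    · -- b = a + p
      exfalso
      set k : ℕ := m.toNat - 1 with hk
      have hkc : ((k + 1 : ℕ) : ℤ) = m := by omega
      have hp := Pm k t
      have hpne : (((k + 1 : ℕ) : ℤ) * (c : ℤ), ((k + 1 : ℕ) : ℤ) * r₀ + t * q) ≠ 0 := by
        intro h
        have h5 : ((k + 1 : ℕ) : ℤ) * (c : ℤ) = 0 := congrArg Prod.fst h
        have h6 : (0 : ℤ) < ((k + 1 : ℕ) : ℤ) * (c : ℤ) :=
          mul_pos (by positivity) hcpos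
        omega
      have heq : b = a + (((k + 1 : ℕ) : ℤ) * (c : ℤ), ((k + 1 : ℕ) : ℤ) * r₀ + t * q) := by
        have hA : b.1 = a.1 + ((k + 1 : ℕ) : ℤ) * (c : ℤ) := by
          linear_combination hm1 - (c : ℤ) * hkc
        have hB : b.2 = a.2 + (((k + 1 : ℕ) : ℤ) * r₀ + t * q) := by
          linear_combination hm2 - r₀ * hkc
        exact Prod.ext hA hB
      exact hkey b a _ hb ha hp hpne heq
  -- conclude: the set of atoms is finite, contradiction
  set f : ℤ × ℤ → ℤ × ℤ :=
    fun a => (a.1 % (c : ℤ), (a.2 - a.1 / (c : ℤ) * r₀) % q) with hf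
  have hInj : Set.InjOn f {a : ℤ × ℤ | IsAtomIn N a} := by
    intro a ha b hb hab
    rw [hf] at hab
    simp only [Prod.mk.injEq] at hab
    exact hψ a b ha hb hab.1 hab.2
  have himg : (f '' {a : ℤ × ℤ | IsAtomIn N a}).Infinite := hinf.image hInj
  have hbox : f '' {a : ℤ × ℤ | IsAtomIn N a} ⊆
      Set.Icc (0 : ℤ) ((c : ℤ) - 1) ×ˢ Set.Icc (0 : ℤ) (q - 1) := by
    rintro _ ⟨a, _, rfl⟩
    simp only [hf, Set.mem_prod, Set.mem_Icc]
    have b1 := Int.emod_nonneg a.1 (ne_of_gt hcpos)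
    have b2 := Int.emod_lt_of_pos a.1 hcpos
    have b3 := Int.emod_nonneg (a.2 - a.1 / (c : ℤ) * r₀) (ne_of_gt hq)
    have b4 := Int.emod_lt_of_pos (a.2 - a.1 / (c : ℤ) * r₀) hq
    refine ⟨⟨b1, by omega⟩, ⟨b3, by omega⟩⟩
  exact himg (((Set.finite_Icc _ _).prod (Set.finite_Icc _ _)).subset hbox)

end CaseB2

section Combine

lemma line_nsmul (N : AddSubmonoid (ℤ × ℤ)) :
    ∀ (n : ℕ) (y : ℤ), ((0 : ℤ), y) ∈ N → ((0 : ℤ), (n : ℤ) * y) ∈ N := by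
  intro n y hy
  induction n with
  | zero => simpa using (show ((0 : ℤ), (0 : ℤ)) ∈ N from zero_mem N)
  | succ n ih =>
    have h := add_mem ih hy
    have he : ((0 : ℤ), (n : ℤ) * y) + ((0 : ℤ), y) = ((0 : ℤ), ((n + 1 : ℕ) : ℤ) * y) := by
      rw [Prod.mk_add_mk, Prod.mk.injEq]; push_cast; exact ⟨by simp, by ring⟩
    rwa [he] at h

lemma line_neg_mem (N : AddSubmonoid (ℤ × ℤ)) (u w : ℤ)
    (huN : ((0 : ℤ), u) ∈ N) (hwN : ((0 : ℤ), w) ∈ N) (hu : u < 0) (hw : 0 < w) :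
    ∀ y : ℤ, ((0 : ℤ), y) ∈ N → ((0 : ℤ), -y) ∈ N := by
  intro y hy
  set Q : ℤ := -(u * w) with hQ
  have hQpos : 0 < Q := by nlinarith
  have h1 : ((0 : ℤ), (Q - 1) * y) ∈ N := by
    have := line_nsmul N (Q - 1).toNat y hy
    rwa [Int.toNat_of_nonneg (by omega)] at this
  have h2 : ((0 : ℤ), u * w * y) ∈ N := by
    rcases le_or_gt 0 y with hy0 | hy0
    · have := line_nsmul N (w * y).toNat u huN
      rw [Int.toNat_of_nonneg (by positivity)] at this
      have he : w * y * u = u * w * y := by ring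
      rwa [he] at this
    · have huy : 0 ≤ u * y := by nlinarith
      have := line_nsmul N (u * y).toNat w hwN
      rw [Int.toNat_of_nonneg huy] at this
      have he : u * y * w = u * w * y := by ring
      rwa [he] at this
  have h3 := add_mem h1 h2
  have he : ((0 : ℤ), (Q - 1) * y) + ((0 : ℤ), u * w * y) = ((0 : ℤ), -y) := by
    rw [Prod.mk_add_mk, Prod.mk.injEq, hQ]
    constructor <;> ring
  rwa [he] at h3

noncomputable def negSnd : (ℤ × ℤ) ≃+ (ℤ × ℤ) :=
  AddEquiv.prodCongr (AddEquiv.refl ℤ) (AddEquiv.neg ℤ)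

lemma negSnd_apply (x : ℤ × ℤ) : negSnd x = (x.1, -x.2) := rfl

lemma auxMain (N : AddSubmonoid (ℤ × ℤ)) (hpos : ∀ x ∈ N, 0 ≤ x.1)
    (hinf : {a : ℤ × ℤ | IsAtomIn N a}.Infinite) : IsAtomicMonoid N := by
  by_cases hg : ∀ y : ℤ, ((0 : ℤ), y) ∈ N → ((0 : ℤ), -y) ∈ N
  · exact aux1 N hpos hg
  · push_neg at hg
    obtain ⟨y₀, hy₀N, hy₀n⟩ := hg
    have hy₀ne : y₀ ≠ 0 := by
      rintro rfl
      exact hy₀n (by simpa using hy₀N)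
    by_cases hneg : ∃ y : ℤ, ((0 : ℤ), y) ∈ N ∧ y < 0
    · -- all line elements are nonpositive; reflect
      obtain ⟨un, hunN, hun⟩ := hneg
      have hline' : ∀ y : ℤ, ((0 : ℤ), y) ∈ N → y ≤ 0 := by
        intro y hy
        by_contra hy'
        push_neg at hy'
        exact hy₀n (line_neg_mem N un y hunN hy hun hy' y₀ hy₀N)
      apply isAtomicMonoid_of_mapEquiv negSnd N
      refine aux2 (N.map negSnd.toAddMonoidHom) ?_ ?_ (-un) (by omega) ?_ ?_
      · rintro z ⟨x, hx, rfl⟩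
        exact hpos x hx
      · intro y hy
        rw [AddSubmonoid.mem_map_equiv] at hy
        have he : negSnd.symm ((0 : ℤ), y) = ((0 : ℤ), -y) := rfl
        rw [he] at hy
        have := hline' (-y) hy
        omega
      · have : negSnd ((0 : ℤ), un) = ((0 : ℤ), -un) := rfl
        rw [← this]
        exact (mem_mapEquiv negSnd N).2 hunN
      · rw [atoms_mapEquiv]
        exact hinf.image negSnd.injective.injOn
    · push_neg at hneg
      have hline : ∀ y : ℤ, ((0 : ℤ), y) ∈ N → 0 ≤ y := fun y hy => hneg y hy
      have hy₀pos : 0 < y₀ := by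
        have := hline y₀ hy₀N
        omega
      exact aux2 N hpos hline y₀ hy₀pos hy₀N hinf

end Combine


/-- A rationally supported submonoid of ℤ² with infinitely many atoms is atomic. -/
theorem rationally_supported_infinitely_many_atoms_atomic
    (M : AddSubmonoid (ℤ × ℤ)) (hM : RationallySupported M)
    (hinf : {a : ℤ × ℤ | IsAtomIn M a}.Infinite) :
    IsAtomicMonoid M := by
  obtain ⟨a, b, hab, hsupp⟩ := hM
  set d : ℤ := (Int.gcd a b : ℤ) with hd
  have hdpos : 0 < d := by
    have : Int.gcd a b ≠ 0 := by
      rw [Ne, Int.gcd_eq_zero_iff]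
      tauto
    omega
  set a₁ : ℤ := a / d with ha₁
  set b₁ : ℤ := b / d with hb₁
  have ha : d * a₁ = a := Int.mul_ediv_cancel' (Int.gcd_dvd_left a b)
  have hb : d * b₁ = b := Int.mul_ediv_cancel' (Int.gcd_dvd_right a b)
  set u : ℤ := Int.gcdA a b with hu
  set v : ℤ := Int.gcdB a b with hv
  have hbez : d = a * u + b * v := Int.gcd_eq_gcd_ab a b
  have h1 : a₁ * u + b₁ * v = 1 := by
    have h2 : d * (a₁ * u + b₁ * v) = d * 1 := by
      linear_combination (-1 : ℤ) * hbez + u * ha + v * hb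
    exact mul_left_cancel₀ (by omega) h2
  let e : (ℤ × ℤ) ≃+ (ℤ × ℤ) :=
    { toFun := fun x => (a₁ * x.1 + b₁ * x.2, -v * x.1 + u * x.2)
      invFun := fun y => (u * y.1 - b₁ * y.2, v * y.1 + a₁ * y.2)
      left_inv := by
        intro x
        rw [Prod.mk.injEq]
        constructor
        · linear_combination x.1 * h1
        · linear_combination x.2 * h1
      right_inv := by
        intro y
        rw [Prod.mk.injEq]
        constructor
        · linear_combination y.1 * h1
        · linear_combination y.2 * h1
      map_add' := by
        intro x y
        rw [Prod.mk.injEq]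
        simp only [Prod.fst_add, Prod.snd_add]
        constructor <;> ring }
  apply isAtomicMonoid_of_mapEquiv e M
  apply auxMain
  · rintro z ⟨x, hx, rfl⟩
    show 0 ≤ a₁ * x.1 + b₁ * x.2
    have h2 := hsupp x hx
    have h3 : a * x.1 + b * x.2 = d * (a₁ * x.1 + b₁ * x.2) := by
      linear_combination x.1 * ha.symm + x.2 * hb.symm
    nlinarith
  · rw [atoms_mapEquiv]
    exact hinf.image e.injective.injOn
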